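/- arXiv:1901.03656 — 5 statements merged into one kernel-verified Lean document; each statement's English description precedes it below -/
import Mathlib

section
/- (Centralized event-triggered formation control, Theorem 1.) Let G be a graph on n vertices with m edges (edge k joining i_k and j_k) with desired distances d_k > 0, let p : [0,∞) → (Fin n → ℝ^d) be differentiable, and let e(t) ∈ ℝ^m denote the distance error vector of p(t). Suppose there exist γ ∈ (0,1), λ > 0, and a function δ : [0,∞) → (Fin n → ℝ^d) such that for all t ≥ 0: (i) ṗ(t) = −R(p(t))ᵀ e(t) − δ(t); (ii) ‖δ(t)‖ ≤ γ ‖R(p(t))ᵀ e(t)‖; and (iii) ‖R(p(t))ᵀ e(t)‖² ≥ λ ‖e(t)‖². Then ‖e(t)‖ ≤ exp(−2(1−γ)λ t) · ‖e(0)‖ for all t ≥ 0; i.e. the distance errors converge to zero exponentially fast with rate at least κ = 2(1−γ)λ. -/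
open Finset

/-- Row of the rigidity matrix dotted with a vector. -/
lemma rigidity_row_sum {n d : ℕ} (i j : Fin n) (q v : Fin n × Fin d → ℝ) :
    ∑ vl : Fin n × Fin d, (if vl.1 = i then q (i, vl.2) - q (j, vl.2)
      else if vl.1 = j then q (j, vl.2) - q (i, vl.2) else 0) * v vl
    = ∑ l, (q (i, l) - q (j, l)) * (v (i, l) - v (j, l)) := by
  rw [Fintype.sum_prod_type]
  by_cases h : i = j
  · subst h; simp [sub_self]
  · have hsplit : ∀ a : Fin n,
        (∑ l, (if a = i then q (i, l) - q (j, l)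
          else if a = j then q (j, l) - q (i, l) else 0) * v (a, l))
        = (if a = i then ∑ l, (q (i, l) - q (j, l)) * v (a, l) else 0)
          + (if a = j then ∑ l, (q (j, l) - q (i, l)) * v (a, l) else 0) := by
      intro a
      by_cases h1 : a = i
      · subst h1; simp [h]
      · by_cases h2 : a = j
        · subst h2; simp [h1]
        · simp [h1, h2]
    calc ∑ a : Fin n, ∑ l, (if a = i then q (i, l) - q (j, l)
          else if a = j then q (j, l) - q (i, l) else 0) * v (a, l)
        = ∑ a : Fin n, ((if a = i then ∑ l, (q (i, l) - q (j, l)) * v (a, l) else 0)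
          + (if a = j then ∑ l, (q (j, l) - q (i, l)) * v (a, l) else 0)) := by
          exact Finset.sum_congr rfl fun a _ => hsplit a
      _ = (∑ l, (q (i, l) - q (j, l)) * v (i, l))
            + ∑ l, (q (j, l) - q (i, l)) * v (j, l) := by
          rw [Finset.sum_add_distrib]
          simp [Finset.sum_ite_eq']
      _ = ∑ l, (q (i, l) - q (j, l)) * (v (i, l) - v (j, l)) := by
          rw [← Finset.sum_add_distrib]
          exact Finset.sum_congr rfl fun l _ => by ring

/-- **Theorem 1, centralized event-triggered formation control.**
If the position vector `p(t) ∈ ℝ^{dn}` evolves as `ṗ = −R(p)ᵀe − δ` with the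
centralized event trigger guaranteeing `‖δ(t)‖ ≤ γ‖R(p(t))ᵀe(t)‖` for some
`γ ∈ (0,1)`, and `‖R(p(t))ᵀe(t)‖² ≥ λ‖e(t)‖²` for some `λ > 0`, then the distance
error vector satisfies `‖e(t)‖ ≤ exp(−2(1−γ)λ t)‖e(0)‖` for all `t ≥ 0`. -/
theorem centralized_event_formation_exponential
    (d n m : ℕ) (ik jk : Fin m → Fin n)
    (dk : Fin m → ℝ) (hdk : ∀ k, 0 < dk k)
    (p : ℝ → EuclideanSpace ℝ (Fin n × Fin d))
    (err : ℝ → EuclideanSpace ℝ (Fin m))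
    (herr : ∀ t k, err t k =
      (∑ l, (p t (ik k, l) - p t (jk k, l)) ^ 2) - (dk k) ^ 2)
    (R : ℝ → Matrix (Fin m) (Fin n × Fin d) ℝ)
    (hR : ∀ t, R t = fun k vl =>
      if vl.1 = ik k then p t (ik k, vl.2) - p t (jk k, vl.2)
      else if vl.1 = jk k then p t (jk k, vl.2) - p t (ik k, vl.2)
      else 0)
    (Rte : ℝ → EuclideanSpace ℝ (Fin n × Fin d))
    (hRte : ∀ t vl, Rte t vl = ∑ k, R t k vl * err t k)
    (γ lam : ℝ) (hγ0 : 0 < γ) (hγ1 : γ < 1) (hlam : 0 < lam)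
    (δ : ℝ → EuclideanSpace ℝ (Fin n × Fin d))
    (hdyn : ∀ t ≥ (0 : ℝ), HasDerivAt p (-(Rte t) - δ t) t)
    (htrig : ∀ t ≥ (0 : ℝ), ‖δ t‖ ≤ γ * ‖Rte t‖)
    (hlamb : ∀ t ≥ (0 : ℝ), lam * ‖err t‖ ^ 2 ≤ ‖Rte t‖ ^ 2) :
    ∀ t ≥ (0 : ℝ), ‖err t‖ ≤ Real.exp (-(2 * (1 - γ) * lam) * t) * ‖err 0‖ := by
  intro T hT
  set κ : ℝ := 2 * (1 - γ) * lam with hκ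
  -- the Lyapunov function
  set V : ℝ → ℝ := fun t =>
    ∑ k, ((∑ l, (p t (ik k, l) - p t (jk k, l)) ^ 2) - dk k ^ 2) ^ 2 with hVdef
  have hVerr : ∀ t, V t = ‖err t‖ ^ 2 := by
    intro t
    have h1 : (‖err t‖ : ℝ) ^ 2 = ∑ k, (err t k) ^ 2 := by
      rw [EuclideanSpace.norm_eq, Real.sq_sqrt (by positivity)]
      simp [Real.norm_eq_abs, sq_abs]
    rw [h1]
    exact Finset.sum_congr rfl fun k _ => by rw [herr t k]
  have hVnonneg : ∀ t, 0 ≤ V t := fun t => by rw [hVerr]; positivity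
  -- the derivative of V
  have key : ∀ t₀, 0 ≤ t₀ → HasDerivAt V
      (4 * ∑ vl, Rte t₀ vl * ((-(Rte t₀) - δ t₀) vl)) t₀ := by
    intro t₀ ht₀
    have hp := hdyn t₀ ht₀
    have hq : ∀ x : Fin n × Fin d,
        HasDerivAt (fun t => p t x) ((-(Rte t₀) - δ t₀) x) t₀ := by
      intro x
      have := (EuclideanSpace.proj (𝕜 := ℝ) x).hasFDerivAt.comp_hasDerivAt t₀ hp
      simpa [Function.comp_def] using this
    have hD : HasDerivAt V
        (∑ k, (2 : ℕ) * ((∑ l, (p t₀ (ik k, l) - p t₀ (jk k, l)) ^ 2) - dk k ^ 2) ^ (2 - 1)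
          * (∑ l, (2 : ℕ) * (p t₀ (ik k, l) - p t₀ (jk k, l)) ^ (2 - 1)
            * ((-(Rte t₀) - δ t₀) (ik k, l) - (-(Rte t₀) - δ t₀) (jk k, l)))) t₀ := by
      apply HasDerivAt.fun_sum
      intro k _
      have hinner : HasDerivAt (fun t => ∑ l, (p t (ik k, l) - p t (jk k, l)) ^ 2)
          (∑ l, (2 : ℕ) * (p t₀ (ik k, l) - p t₀ (jk k, l)) ^ (2 - 1)
            * ((-(Rte t₀) - δ t₀) (ik k, l) - (-(Rte t₀) - δ t₀) (jk k, l))) t₀ := by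
        apply HasDerivAt.fun_sum
        intro l _
        exact ((hq (ik k, l)).sub (hq (jk k, l))).pow 2
      exact (hinner.sub_const (dk k ^ 2)).pow 2
    convert hD using 1
    -- sum identity
    have hrow : ∀ k, (∑ vl : Fin n × Fin d, R t₀ k vl * ((-(Rte t₀) - δ t₀) vl))
        = ∑ l, (p t₀ (ik k, l) - p t₀ (jk k, l))
            * ((-(Rte t₀) - δ t₀) (ik k, l) - (-(Rte t₀) - δ t₀) (jk k, l)) := by
      intro k
      rw [hR]
      exact rigidity_row_sum (ik k) (jk k) (fun x => p t₀ x) (fun x => (-(Rte t₀) - δ t₀) x)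
    calc 4 * ∑ vl, Rte t₀ vl * ((-(Rte t₀) - δ t₀) vl)
        = 4 * ∑ vl, (∑ k, R t₀ k vl * err t₀ k) * ((-(Rte t₀) - δ t₀) vl) := by
          congr 1
          exact Finset.sum_congr rfl fun vl _ => by rw [hRte]
      _ = 4 * ∑ k, err t₀ k * ∑ vl, R t₀ k vl * ((-(Rte t₀) - δ t₀) vl) := by
          congr 1
          simp_rw [Finset.sum_mul]
          rw [Finset.sum_comm]
          refine Finset.sum_congr rfl fun k _ => ?_
          rw [Finset.mul_sum]
          exact Finset.sum_congr rfl fun vl _ => by ring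
      _ = ∑ k, (2 : ℕ) * ((∑ l, (p t₀ (ik k, l) - p t₀ (jk k, l)) ^ 2) - dk k ^ 2) ^ (2 - 1)
          * (∑ l, (2 : ℕ) * (p t₀ (ik k, l) - p t₀ (jk k, l)) ^ (2 - 1)
            * ((-(Rte t₀) - δ t₀) (ik k, l) - (-(Rte t₀) - δ t₀) (jk k, l))) := by
          rw [Finset.mul_sum]
          refine Finset.sum_congr rfl fun k _ => ?_
          rw [hrow, ← herr t₀ k]
          simp only [show (2:ℕ)-1 = 1 from rfl, pow_one, Nat.cast_ofNat]
          simp_rw [Finset.mul_sum]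
          exact Finset.sum_congr rfl fun l _ => by ring
  -- differential inequality
  have hineq : ∀ t₀, 0 ≤ t₀ →
      4 * ∑ vl, Rte t₀ vl * ((-(Rte t₀) - δ t₀) vl) ≤ -(2 * κ) * V t₀ := by
    intro t₀ ht₀
    have hsum : (∑ vl, Rte t₀ vl * ((-(Rte t₀) - δ t₀) vl))
        = -(‖Rte t₀‖ ^ 2) - inner ℝ (Rte t₀) (δ t₀) := by
      have h1 : (inner ℝ (Rte t₀) (Rte t₀) : ℝ) = ∑ vl, Rte t₀ vl * Rte t₀ vl := by
        simp only [PiLp.inner_apply, RCLike.inner_apply, conj_trivial, mul_comm]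
      have h2 : (inner ℝ (Rte t₀) (δ t₀) : ℝ) = ∑ vl, Rte t₀ vl * δ t₀ vl := by
        simp [PiLp.inner_apply, RCLike.inner_apply, mul_comm]
      rw [← real_inner_self_eq_norm_sq, h1, h2, ← Finset.sum_neg_distrib, ← Finset.sum_sub_distrib]
      refine Finset.sum_congr rfl fun vl _ => ?_
      simp [PiLp.sub_apply, PiLp.neg_apply]
      ring
    rw [hsum, hVerr]
    have hip : -(inner ℝ (Rte t₀) (δ t₀) : ℝ) ≤ ‖Rte t₀‖ * ‖δ t₀‖ := by
      have := abs_real_inner_le_norm (Rte t₀) (δ t₀)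
      cases' abs_le.mp this with h _
      linarith
    have htr := htrig t₀ ht₀
    have hlb := hlamb t₀ ht₀
    have hRn : (0 : ℝ) ≤ ‖Rte t₀‖ := norm_nonneg _
    nlinarith [mul_le_mul_of_nonneg_left htr hRn,
      mul_le_mul_of_nonneg_left hlb (by linarith : (0:ℝ) ≤ 1 - γ)]
  -- Gronwall via antitonicity of g
  set g : ℝ → ℝ := fun t => V t * Real.exp (2 * κ * t) with hg
  have hgd : ∀ t₀, 0 ≤ t₀ → HasDerivAt g
      ((4 * ∑ vl, Rte t₀ vl * ((-(Rte t₀) - δ t₀) vl)) * Real.exp (2 * κ * t₀)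
        + V t₀ * (Real.exp (2 * κ * t₀) * (2 * κ))) t₀ := by
    intro t₀ ht₀
    have hexp : HasDerivAt (fun t => Real.exp (2 * κ * t)) (Real.exp (2 * κ * t₀) * (2 * κ)) t₀ := by
      have h1 : HasDerivAt (fun t : ℝ => 2 * κ * t) (2 * κ) t₀ := by
        simpa using (hasDerivAt_id t₀).const_mul (2 * κ)
      exact h1.exp
    exact (key t₀ ht₀).mul hexp
  have hanti : AntitoneOn g (Set.Icc 0 T) := by
    apply antitoneOn_of_deriv_nonpos (convex_Icc 0 T)
    · intro t ht
      exact ((hgd t ht.1).continuousAt).continuousWithinAt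
    · intro t ht
      rw [interior_Icc] at ht
      exact ((hgd t ht.1.le).differentiableAt).differentiableWithinAt
    · intro t ht
      rw [interior_Icc] at ht
      rw [(hgd t ht.1.le).deriv]
      have h1 := hineq t ht.1.le
      have h2 := hVnonneg t
      have h3 : (0 : ℝ) < Real.exp (2 * κ * t) := Real.exp_pos _
      nlinarith
  have hgT : g T ≤ g 0 := hanti (Set.left_mem_Icc.mpr hT) (Set.mem_Icc.mpr ⟨hT, le_refl T⟩) hT
  -- conclude
  have hg0 : g 0 = V 0 := by simp [hg]
  have hE : (0 : ℝ) < Real.exp (κ * T) := Real.exp_pos _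
  have hsq : Real.exp (2 * κ * T) = Real.exp (κ * T) * Real.exp (κ * T) := by
    rw [← Real.exp_add]; ring_nf
  have hVT : V T * (Real.exp (κ * T) * Real.exp (κ * T)) ≤ V 0 := by
    rw [← hsq]; rw [hg0] at hgT; exact hgT
  rw [hVerr, hVerr] at hVT
  have hmain : ‖err T‖ * Real.exp (κ * T) ≤ ‖err 0‖ := by
    nlinarith [norm_nonneg (err T), norm_nonneg (err 0),
      mul_nonneg (norm_nonneg (err T)) hE.le]
  have hexpneg : Real.exp (-κ * T) = (Real.exp (κ * T))⁻¹ := by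
    rw [← Real.exp_neg]; ring_nf
  calc ‖err T‖ ≤ ‖err 0‖ / Real.exp (κ * T) := by
        rw [le_div_iff₀ hE]; exact hmain
    _ = Real.exp (-κ * T) * ‖err 0‖ := by
        rw [hexpneg]; ring
end

section
/- (Core comparison estimate for the inter-event time lower bound, Theorem 2.) Let α > 0 and γ > 0, and set τ = γ/(α(1+γ)). Let T > 0 and let y : [0,T] → ℝ be differentiable with y(0) = 0, y(t) ≥ 0 for all t, and y′(t) ≤ α(1 + y(t))² for all t ∈ [0,T]. Then y(t) ≤ α t/(1 − α t) for all t ∈ [0, min(T, τ)], and in particular y(t) ≤ γ for all t ∈ [0, min(T, τ)]. Consequently, a quantity starting at 0 whose growth rate is bounded by α(1+y)² needs at least time τ = γ/(α(1+γ)) > 0 to reach the value γ. -/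
/-- **core comparison estimate for the inter-event time, Theorem 2.**
If `y(0) = 0`, `y ≥ 0`, and `y′(t) ≤ α(1 + y(t))²` on `[0, T]`, with `α, γ > 0` and
`τ = γ/(α(1+γ))`, then `y(t) ≤ αt/(1 − αt)` and `y(t) ≤ γ` for all
`t ∈ [0, min T τ]`: the ratio `y` needs at least time `τ > 0` to grow from `0` to `γ`. -/
theorem inter_event_comparison (α γ T : ℝ) (hα : 0 < α) (hγ : 0 < γ) (hT : 0 < T)
    (τ : ℝ) (hτ : τ = γ / (α * (1 + γ)))
    (y y' : ℝ → ℝ)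
    (hderiv : ∀ t ∈ Set.Icc (0 : ℝ) T, HasDerivAt y (y' t) t)
    (hy0 : y 0 = 0)
    (hnonneg : ∀ t ∈ Set.Icc (0 : ℝ) T, 0 ≤ y t)
    (hbound : ∀ t ∈ Set.Icc (0 : ℝ) T, y' t ≤ α * (1 + y t) ^ 2) :
    ∀ t ∈ Set.Icc (0 : ℝ) (min T τ), y t ≤ α * t / (1 - α * t) ∧ y t ≤ γ := by
  set F : ℝ → ℝ := fun t => α * t + (1 + y t)⁻¹ with hF
  have hpos : ∀ t ∈ Set.Icc (0 : ℝ) T, (0:ℝ) < 1 + y t := fun t ht => by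
    have := hnonneg t ht; linarith
  have hFderiv : ∀ t ∈ Set.Icc (0 : ℝ) T,
      HasDerivAt F (α + -(y' t) / (1 + y t) ^ 2) t := by
    intro t ht
    have h1 : HasDerivAt (fun s => (1 + y s)⁻¹) (-(y' t) / (1 + y t) ^ 2) t := by
      exact ((hderiv t ht).const_add 1).inv (ne_of_gt (hpos t ht))
    have h2 := ((hasDerivAt_id t).const_mul α).add h1
    rw [mul_one] at h2; exact h2
  have hFderiv_nonneg : ∀ t ∈ Set.Icc (0 : ℝ) T, 0 ≤ α + -(y' t) / (1 + y t) ^ 2 := by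
    intro t ht
    have hp : (0:ℝ) < (1 + y t) ^ 2 := pow_pos (hpos t ht) 2
    have := hbound t ht
    rw [← sub_nonneg] at *
    have : 0 ≤ (α * (1 + y t) ^ 2 - y' t) / (1 + y t) ^ 2 := div_nonneg this hp.le
    have heq : (α * (1 + y t) ^ 2 - y' t) / (1 + y t) ^ 2
        = α + -(y' t) / (1 + y t) ^ 2 - 0 := by
      rw [sub_zero, sub_div, mul_div_assoc, div_self hp.ne', mul_one]; ring
    linarith [heq ▸ this]
  have hmono : MonotoneOn F (Set.Icc (0 : ℝ) T) := by
    apply monotoneOn_of_deriv_nonneg (convex_Icc 0 T)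
    · intro t ht; exact (hFderiv t ht).continuousAt.continuousWithinAt
    · intro t ht
      exact (hFderiv t (interior_subset ht)).differentiableAt.differentiableWithinAt
    · intro t ht
      rw [(hFderiv t (interior_subset ht)).deriv]
      exact hFderiv_nonneg t (interior_subset ht)
  intro t ht
  obtain ⟨ht0, htm⟩ := ht
  have htT : t ≤ T := htm.trans (min_le_left _ _)
  have htτ : t ≤ τ := htm.trans (min_le_right _ _)
  have hγ1 : (0:ℝ) < 1 + γ := by linarith
  have hατ : α * τ = γ / (1 + γ) := by
    rw [hτ]; field_simp
  have h1at : 0 < 1 - α * t := by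
    have h1 : α * t ≤ α * τ := by
      exact mul_le_mul_of_nonneg_left htτ hα.le
    have h2 : γ / (1 + γ) < 1 := by
      rw [div_lt_one hγ1]; linarith
    rw [hατ] at h1; linarith
  have htmem : t ∈ Set.Icc (0:ℝ) T := ⟨ht0, htT⟩
  have hmem0 : (0:ℝ) ∈ Set.Icc (0:ℝ) T := ⟨le_refl _, hT.le⟩
  have hF0 : F 0 = 1 := by simp [hF, hy0]
  have hkey : 1 ≤ α * t + (1 + y t)⁻¹ := by
    have := hmono hmem0 htmem ht0
    rw [hF0] at this; exact this
  have hyt : 0 ≤ y t := hnonneg t htmem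
  have hinv : 1 - α * t ≤ (1 + y t)⁻¹ := by linarith
  have h2 : 1 + y t ≤ (1 - α * t)⁻¹ := by
    rw [← inv_inv (1 + y t)]
    exact inv_anti₀ h1at hinv
  have hbnd : y t ≤ α * t / (1 - α * t) := by
    have : (1 - α * t)⁻¹ - 1 = α * t / (1 - α * t) := by
      field_simp
      ring
    linarith [h2, this]
  refine ⟨hbnd, hbnd.trans ?_⟩
  rw [div_le_iff₀ h1at]
  have : α * t * (1 + γ) ≤ γ := by
    have : α * t ≤ γ / (1 + γ) := by
      rw [← hατ]; exact mul_le_mul_of_nonneg_left htτ hα.le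
    calc α * t * (1 + γ) ≤ γ / (1 + γ) * (1 + γ) := by nlinarith
    _ = γ := by field_simp
  nlinarith
end

section
/- (Distributed event-triggered formation control, Theorem 3.) Let G be a graph on n vertices with m edges with desired distances d_k > 0, let p : [0,∞) → (Fin n → ℝ^d) be differentiable, let e(t) ∈ ℝ^m denote the distance error vector of p(t), and for each agent i let w_i(t) := (R(p(t))ᵀ e(t))_i ∈ ℝ^d denote the i-th d-dimensional block of R(p(t))ᵀe(t). Suppose there exist constants a_i ∈ (0,1), γ_i ∈ (0,1) for i = 1,…,n, a constant λ > 0, and functions δ_i : [0,∞) → ℝ^d such that for all t ≥ 0 and all i: (i) ṗ_i(t) = −w_i(t) − δ_i(t); (ii) ‖δ_i(t)‖² ≤ γ_i a_i (2 − a_i) ‖w_i(t)‖²; and (iii) ∑_{i=1}^n ‖w_i(t)‖² ≥ λ‖e(t)‖². Then ‖e(t)‖ ≤ exp(−2ζλ t)·‖e(0)‖ for all t ≥ 0, where ζ = min_i (1 − γ_i)(2 − a_i)/2; i.e. the distance errors converge to zero exponentially fast. -/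

private lemma aux_inner_pair {E' : Type*} [NormedAddCommGroup E'] [InnerProductSpace ℝ E']
    (u v x y : E') (cc : ℝ) :
    cc * (inner ℝ (u - v) x : ℝ) + cc * (inner ℝ (v - u) y : ℝ)
      = cc * (inner ℝ (u - v) (x - y) : ℝ) := by
  have h : (inner ℝ (v - u) y : ℝ) = -(inner ℝ (u - v) y : ℝ) := by
    rw [← inner_neg_left, neg_sub]
  rw [h, inner_sub_right]
  ring

/-- **Theorem 3, distributed event-triggered formation control.**
Each agent `i` moves as `ṗ_i = −w_i − δ_i`, where `w_i = (R(p)ᵀe)_i =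
∑_{j ∈ N_i} e_{ij}(p_i − p_j)` is the `i`-th `d`-dimensional block of `R(p)ᵀe`.
If the distributed event trigger guarantees `‖δ_i(t)‖² ≤ γ_i a_i (2−a_i)‖w_i(t)‖²`
with `a_i, γ_i ∈ (0,1)`, and `∑_i ‖w_i(t)‖² ≥ λ‖e(t)‖²` with `λ > 0`, then
`‖e(t)‖ ≤ exp(−2ζλ t)‖e(0)‖` where `ζ = min_i (1−γ_i)(2−a_i)/2`. -/
theorem distributed_event_formation_exponential
    (d n m : ℕ) [NeZero n] (ik jk : Fin m → Fin n)
    (dk : Fin m → ℝ) (hdk : ∀ k, 0 < dk k)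
    (p : ℝ → Fin n → EuclideanSpace ℝ (Fin d))
    (err : ℝ → EuclideanSpace ℝ (Fin m))
    (herr : ∀ t k, err t k = ‖p t (ik k) - p t (jk k)‖ ^ 2 - (dk k) ^ 2)
    (w : ℝ → Fin n → EuclideanSpace ℝ (Fin d))
    (hw : ∀ t i, w t i = ∑ k,
      ((if i = ik k then err t k • (p t (ik k) - p t (jk k)) else 0) +
       (if i = jk k then err t k • (p t (jk k) - p t (ik k)) else 0)))
    (a γ : Fin n → ℝ) (ha : ∀ i, 0 < a i ∧ a i < 1) (hγ : ∀ i, 0 < γ i ∧ γ i < 1)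
    (lam : ℝ) (hlam : 0 < lam)
    (δ : ℝ → Fin n → EuclideanSpace ℝ (Fin d))
    (hdyn : ∀ t ≥ (0 : ℝ), ∀ i, HasDerivAt (fun s => p s i) (-(w t i) - δ t i) t)
    (htrig : ∀ t ≥ (0 : ℝ), ∀ i,
      ‖δ t i‖ ^ 2 ≤ γ i * a i * (2 - a i) * ‖w t i‖ ^ 2)
    (hlamb : ∀ t ≥ (0 : ℝ), lam * ‖err t‖ ^ 2 ≤ ∑ i, ‖w t i‖ ^ 2)
    (ζ : ℝ)
    (hζ : ζ = Finset.univ.inf' Finset.univ_nonempty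
      (fun i => (1 - γ i) * (2 - a i) / 2)) :
    ∀ t ≥ (0 : ℝ), ‖err t‖ ≤ Real.exp (-(2 * ζ * lam) * t) * ‖err 0‖ := by
  classical
  have hζpos : 0 < ζ := by
    rw [hζ, Finset.lt_inf'_iff]
    intro i _
    have h1 := (ha i).2
    have h2 := (hγ i).2
    nlinarith
  -- Lyapunov function
  set V : ℝ → ℝ := fun s => ∑ k, (err s k) ^ 2 with hVdef
  have hVnorm : ∀ s, V s = ‖err s‖ ^ 2 := by
    intro s
    rw [EuclideanSpace.norm_eq, Real.sq_sqrt (by positivity)]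
    simp [hVdef, sq_abs]
  have hVnonneg : ∀ s, 0 ≤ V s := fun s => by rw [hVnorm]; positivity
  set c : ℝ := 4 * ζ * lam with hcdef
  set D : ℝ → ℝ := fun t => 4 * ∑ i, (inner ℝ (w t i) (-(w t i) - δ t i) : ℝ) with hDdef
  -- derivative of V
  have hVderiv : ∀ t, 0 ≤ t → HasDerivAt V (D t) t := by
    intro t ht
    set q : Fin n → EuclideanSpace ℝ (Fin d) := fun i => -(w t i) - δ t i with hq
    have herrD : ∀ k, HasDerivAt (fun s => err s k)
        (2 * (inner ℝ (p t (ik k) - p t (jk k)) (q (ik k) - q (jk k)) : ℝ)) t := by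
      intro k
      have hf : HasDerivAt (fun s => p s (ik k) - p s (jk k)) (q (ik k) - q (jk k)) t :=
        (hdyn t ht (ik k)).sub (hdyn t ht (jk k))
      have h1 := (hf.inner ℝ hf).sub_const ((dk k) ^ 2)
      have heq : (fun s => (inner ℝ (p s (ik k) - p s (jk k)) (p s (ik k) - p s (jk k)) : ℝ)
          - (dk k) ^ 2) = fun s => err s k := by
        funext s
        rw [herr s k, real_inner_self_eq_norm_sq]
      rw [heq] at h1
      refine h1.congr_deriv ?_
      rw [real_inner_comm (q (ik k) - q (jk k)) (p t (ik k) - p t (jk k))]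
      ring
    have hVD : HasDerivAt V (∑ k, (2 : ℝ) * err t k ^ (2 - 1) *
        (2 * (inner ℝ (p t (ik k) - p t (jk k)) (q (ik k) - q (jk k)) : ℝ))) t := by
      refine HasDerivAt.fun_sum fun k _ => ?_
      exact (herrD k).pow 2
    have hkey : ∑ i, (inner ℝ (w t i) (q i) : ℝ)
        = ∑ k, err t k * (inner ℝ (p t (ik k) - p t (jk k)) (q (ik k) - q (jk k)) : ℝ) := by
      calc ∑ i, (inner ℝ (w t i) (q i) : ℝ)
          = ∑ i, ∑ k,
            ((if i = ik k then err t k * (inner ℝ (p t (ik k) - p t (jk k)) (q i) : ℝ) else 0)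
            + (if i = jk k then err t k * (inner ℝ (p t (jk k) - p t (ik k)) (q i) : ℝ) else 0)) := by
            refine Finset.sum_congr rfl fun i _ => ?_
            rw [hw t i, sum_inner]
            refine Finset.sum_congr rfl fun k _ => ?_
            rw [inner_add_left]
            congr 1
            · split_ifs with h
              · rw [real_inner_smul_left]
              · exact inner_zero_left _
            · split_ifs with h
              · rw [real_inner_smul_left]
              · exact inner_zero_left _
        _ = ∑ k, ∑ i,
            ((if i = ik k then err t k * (inner ℝ (p t (ik k) - p t (jk k)) (q i) : ℝ) else 0)
            + (if i = jk k then err t k * (inner ℝ (p t (jk k) - p t (ik k)) (q i) : ℝ) else 0)) :=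
            Finset.sum_comm
        _ = ∑ k, (err t k * (inner ℝ (p t (ik k) - p t (jk k)) (q (ik k)) : ℝ)
              + err t k * (inner ℝ (p t (jk k) - p t (ik k)) (q (jk k)) : ℝ)) := by
            refine Finset.sum_congr rfl fun k _ => ?_
            rw [Finset.sum_add_distrib, Finset.sum_ite_eq', Finset.sum_ite_eq']
            simp
        _ = ∑ k, err t k * (inner ℝ (p t (ik k) - p t (jk k)) (q (ik k) - q (jk k)) : ℝ) :=
            Finset.sum_congr rfl fun k _ =>
              aux_inner_pair (p t (ik k)) (p t (jk k)) (q (ik k)) (q (jk k)) (err t k)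
    convert hVD using 1
    rw [hDdef]
    show (4 : ℝ) * ∑ i, (inner ℝ (w t i) (q i) : ℝ) = _
    rw [hkey, Finset.mul_sum]
    refine Finset.sum_congr rfl fun k _ => ?_
    ring
  -- the derivative bound
  have hbound : ∀ t, 0 ≤ t → D t ≤ -c * V t := by
    intro t ht
    have h1 : ∀ i, (inner ℝ (w t i) (-(w t i) - δ t i) : ℝ) ≤ -(ζ * ‖w t i‖ ^ 2) := by
      intro i
      obtain ⟨ha1, ha2⟩ := ha i
      obtain ⟨hγ1, hγ2⟩ := hγ i
      have htr := htrig t ht i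
      have hζle : ζ ≤ (1 - γ i) * (2 - a i) / 2 := by
        rw [hζ]; exact Finset.inf'_le _ (Finset.mem_univ i)
      have hip : (inner ℝ (w t i) (-(w t i) - δ t i) : ℝ)
          = -‖w t i‖ ^ 2 - (inner ℝ (w t i) (δ t i) : ℝ) := by
        rw [inner_sub_right, inner_neg_right, real_inner_self_eq_norm_sq]
      have hcs : -(inner ℝ (w t i) (δ t i) : ℝ) ≤ ‖w t i‖ * ‖δ t i‖ :=
        (neg_le_abs _).trans (abs_real_inner_le_norm _ _)
      rw [hip]
      have hx : (0 : ℝ) ≤ ‖w t i‖ := norm_nonneg _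
      have hy : (0 : ℝ) ≤ ‖δ t i‖ := norm_nonneg _
      have h2a : (0 : ℝ) < 2 * a i := by positivity
      have hyoung : ‖w t i‖ * ‖δ t i‖
          ≤ a i / 2 * ‖w t i‖ ^ 2 + ‖δ t i‖ ^ 2 / (2 * a i) := by
        have hmul : 2 * a i * (‖w t i‖ * ‖δ t i‖)
            ≤ 2 * a i * (a i / 2 * ‖w t i‖ ^ 2 + ‖δ t i‖ ^ 2 / (2 * a i)) := by
          have heq : 2 * a i * (a i / 2 * ‖w t i‖ ^ 2 + ‖δ t i‖ ^ 2 / (2 * a i))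
              = a i ^ 2 * ‖w t i‖ ^ 2 + ‖δ t i‖ ^ 2 := by
            field_simp
          rw [heq]
          nlinarith [sq_nonneg (a i * ‖w t i‖ - ‖δ t i‖)]
        exact le_of_mul_le_mul_left hmul h2a
      have htr2 : ‖δ t i‖ ^ 2 / (2 * a i) ≤ γ i * (2 - a i) / 2 * ‖w t i‖ ^ 2 := by
        rw [div_le_iff₀ (by positivity)]
        nlinarith
      nlinarith [sq_nonneg (‖w t i‖), mul_le_mul_of_nonneg_right hζle (sq_nonneg (‖w t i‖))]
    have h2 : ∑ i, (inner ℝ (w t i) (-(w t i) - δ t i) : ℝ) ≤ -(ζ * (lam * ‖err t‖ ^ 2)) := by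
      calc ∑ i, (inner ℝ (w t i) (-(w t i) - δ t i) : ℝ)
          ≤ ∑ i, -(ζ * ‖w t i‖ ^ 2) := Finset.sum_le_sum fun i _ => h1 i
        _ = -(ζ * ∑ i, ‖w t i‖ ^ 2) := by
            rw [Finset.sum_neg_distrib, ← Finset.mul_sum]
        _ ≤ -(ζ * (lam * ‖err t‖ ^ 2)) := by
            have := mul_le_mul_of_nonneg_left (hlamb t ht) hζpos.le
            linarith
    show (4 : ℝ) * ∑ i, (inner ℝ (w t i) (-(w t i) - δ t i) : ℝ) ≤ -(4 * ζ * lam) * V t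
    rw [hVnorm t]
    linarith
  -- Gronwall via monotonicity
  have hgd : ∀ s, 0 ≤ s → HasDerivAt (fun u => V u * Real.exp (c * u))
      ((D s + c * V s) * Real.exp (c * s)) s := by
    intro s hs
    have hexp : HasDerivAt (fun u : ℝ => Real.exp (c * u)) (Real.exp (c * s) * (c * 1)) s :=
      ((hasDerivAt_id s).const_mul c).exp
    have := (hVderiv s hs).mul hexp
    refine this.congr_deriv ?_
    ring
  have hanti : AntitoneOn (fun u => V u * Real.exp (c * u)) (Set.Ici 0) := by
    apply antitoneOn_of_deriv_nonpos (convex_Ici 0)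
    · intro s hs
      exact ((hgd s hs).continuousAt).continuousWithinAt
    · intro s hs
      rw [interior_Ici] at hs
      exact ((hgd s (le_of_lt hs)).differentiableAt).differentiableWithinAt
    · intro s hs
      rw [interior_Ici] at hs
      rw [(hgd s (le_of_lt hs)).deriv]
      have hb := hbound s (le_of_lt hs)
      have he := (Real.exp_pos (c * s)).le
      nlinarith
  intro t ht
  have key := hanti (Set.self_mem_Ici) (Set.mem_Ici.2 ht) ht
  simp only [mul_zero, Real.exp_zero, mul_one] at key
  -- key : V t * exp (c t) ≤ V 0
  have hsq : ‖err t‖ ^ 2 ≤ (Real.exp (-(2 * ζ * lam) * t) * ‖err 0‖) ^ 2 := by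
    have hE : Real.exp (c * t) * Real.exp (-(c * t)) = 1 := by
      rw [← Real.exp_add]; simp
    have h3 := mul_le_mul_of_nonneg_right key (Real.exp_pos (-(c * t))).le
    rw [mul_assoc, hE, mul_one] at h3
    have h4 : (Real.exp (-(2 * ζ * lam) * t) * ‖err 0‖) ^ 2
        = V 0 * Real.exp (-(c * t)) := by
      have harg : -(2 * ζ * lam) * t + -(2 * ζ * lam) * t = -(c * t) := by
        rw [hcdef]; ring
      rw [mul_pow, pow_two (Real.exp _), ← Real.exp_add, harg, hVnorm]
      ring
    rw [h4, ← hVnorm t]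
    exact h3
  have h5 : (0 : ℝ) ≤ Real.exp (-(2 * ζ * lam) * t) * ‖err 0‖ := by positivity
  nlinarith [norm_nonneg (err t)]
end

section
/- (Distributed formation control with the modified event function, Theorem 5.) Let G be a graph on n vertices with m edges with desired distances d_k > 0, let p : [0,∞) → (Fin n → ℝ^d) be differentiable, let e(t) ∈ ℝ^m denote the distance error vector of p(t), and for each agent i set w_i(t) := (R(p(t))ᵀ e(t))_i ∈ ℝ^d. Suppose there exist constants a_i, γ_i ∈ (0,1), v_i > 0, θ_i > 0, λ > 0, and functions δ_i : [0,∞) → ℝ^d such that for all t ≥ 0 and all i: (i) ṗ_i(t) = −w_i(t) − δ_i(t); (ii) ‖δ_i(t)‖² ≤ γ_i a_i (2−a_i) ‖w_i(t)‖² + 2 a_i v_i exp(−θ_i t); (iii) ∑_{i=1}^n ‖w_i(t)‖² ≥ λ‖e(t)‖²; and (iv) θ_i ≠ 4ζλ for all i, where ζ = min_i (1−γ_i)(2−a_i)/2. Then, with κ = 2ζλ, for all t ≥ 0: (1/4)‖e(t)‖² ≤ exp(−2κ t)·(1/4)‖e(0)‖² + ∑_{i=1}^n (v_i/(2κ − θ_i))·(exp(−θ_i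 t) − exp(−2κ t)), and consequently ‖e(t)‖ → 0 as t → ∞; i.e. the agents reach the desired formation shape. -/
open Real Filter
open scoped RealInnerProductSpace

/-- **Theorem 5, distributed formation control with the modified event
function.** Each agent `i` moves as `ṗ_i = −w_i − δ_i` with `w_i = (R(p)ᵀe)_i`.
If the modified distributed event trigger guarantees
`‖δ_i(t)‖² ≤ γ_i a_i(2−a_i)‖w_i(t)‖² + 2a_i v_i exp(−θ_i t)`, and
`∑_i ‖w_i(t)‖² ≥ λ‖e(t)‖²`, with `a_i, γ_i ∈ (0,1)`, `v_i, θ_i, λ > 0` and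
`θ_i ≠ 4ζλ` where `ζ = min_i (1−γ_i)(2−a_i)/2`, then with `κ = 2ζλ`:
`(1/4)‖e(t)‖² ≤ exp(−2κt)(1/4)‖e(0)‖² + ∑_i (v_i/(2κ−θ_i))(exp(−θ_i t) − exp(−2κt))`
for all `t ≥ 0`, and `‖e(t)‖ → 0` as `t → ∞`. -/
theorem distributed_modified_event_formation
    (d n m : ℕ) [NeZero n] (ik jk : Fin m → Fin n)
    (dk : Fin m → ℝ) (hdk : ∀ k, 0 < dk k)
    (p : ℝ → Fin n → EuclideanSpace ℝ (Fin d))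
    (err : ℝ → EuclideanSpace ℝ (Fin m))
    (herr : ∀ t k, err t k = ‖p t (ik k) - p t (jk k)‖ ^ 2 - (dk k) ^ 2)
    (w : ℝ → Fin n → EuclideanSpace ℝ (Fin d))
    (hw : ∀ t i, w t i = ∑ k,
      ((if i = ik k then err t k • (p t (ik k) - p t (jk k)) else 0) +
       (if i = jk k then err t k • (p t (jk k) - p t (ik k)) else 0)))
    (a γ v θ : Fin n → ℝ)
    (ha : ∀ i, 0 < a i ∧ a i < 1) (hγ : ∀ i, 0 < γ i ∧ γ i < 1)
    (hv : ∀ i, 0 < v i) (hθ : ∀ i, 0 < θ i)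
    (lam : ℝ) (hlam : 0 < lam)
    (ζ : ℝ)
    (hζ : ζ = Finset.univ.inf' Finset.univ_nonempty
      (fun i => (1 - γ i) * (2 - a i) / 2))
    (hθζ : ∀ i, θ i ≠ 4 * ζ * lam)
    (κ : ℝ) (hκ : κ = 2 * ζ * lam)
    (δ : ℝ → Fin n → EuclideanSpace ℝ (Fin d))
    (hdyn : ∀ t ≥ (0 : ℝ), ∀ i, HasDerivAt (fun s => p s i) (-(w t i) - δ t i) t)
    (htrig : ∀ t ≥ (0 : ℝ), ∀ i, ‖δ t i‖ ^ 2 ≤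
      γ i * a i * (2 - a i) * ‖w t i‖ ^ 2 + 2 * a i * v i * Real.exp (-θ i * t))
    (hlamb : ∀ t ≥ (0 : ℝ), lam * ‖err t‖ ^ 2 ≤ ∑ i, ‖w t i‖ ^ 2) :
    (∀ t ≥ (0 : ℝ), (1 / 4) * ‖err t‖ ^ 2 ≤
        Real.exp (-(2 * κ) * t) * ((1 / 4) * ‖err 0‖ ^ 2) +
        ∑ i, v i / (2 * κ - θ i) *
          (Real.exp (-θ i * t) - Real.exp (-(2 * κ) * t))) ∧
    Filter.Tendsto (fun t => ‖err t‖) Filter.atTop (nhds 0) := by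
  -- basic positivity
  have hζle : ∀ i, ζ ≤ (1 - γ i) * (2 - a i) / 2 := by
    intro i; rw [hζ]; exact Finset.inf'_le _ (Finset.mem_univ i)
  have hζpos : 0 < ζ := by
    rw [hζ]
    rw [Finset.lt_inf'_iff]
    intro i _
    have h1 := (hγ i).2; have h2 := (ha i).2
    have : 0 < (1 - γ i) * (2 - a i) := mul_pos (by linarith) (by linarith)
    linarith
  have hκpos : 0 < κ := by rw [hκ]; positivity
  have hbne : ∀ i, 2 * κ - θ i ≠ 0 := by
    intro i h
    exact hθζ i (by rw [hκ] at h; linarith)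
  -- norm-squared on EuclideanSpace
  have hnormsq : ∀ {N : ℕ} (x : EuclideanSpace ℝ (Fin N)), ‖x‖ ^ 2 = ∑ k, x k ^ 2 := by
    intro N x
    rw [EuclideanSpace.norm_sq_eq]
    simp [Real.norm_eq_abs, sq_abs]
  -- derivative of V := 1/4 ‖err‖² is D
  have hVderiv : ∀ t, 0 ≤ t → HasDerivAt (fun s => (1/4) * ‖err s‖ ^ 2)
      (∑ i, ⟪w t i, -(w t i) - δ t i⟫) t := by
    intro t ht
    have hek : ∀ k, HasDerivAt (fun s => err s k)
        (2 * ⟪p t (ik k) - p t (jk k),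
          (-(w t (ik k)) - δ t (ik k)) - (-(w t (jk k)) - δ t (jk k))⟫) t := by
      intro k
      have hq : HasDerivAt (fun s => p s (ik k) - p s (jk k))
          ((-(w t (ik k)) - δ t (ik k)) - (-(w t (jk k)) - δ t (jk k))) t :=
        (hdyn t ht (ik k)).sub (hdyn t ht (jk k))
      have h2 := (hq.inner ℝ hq).sub_const ((dk k) ^ 2)
      have hfun : (fun s => err s k) =
          (fun s => ⟪p s (ik k) - p s (jk k), p s (ik k) - p s (jk k)⟫ - (dk k) ^ 2) := by
        funext s; rw [herr s k, real_inner_self_eq_norm_sq]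
      rw [hfun]
      refine h2.congr_deriv ?_
      rw [real_inner_comm ((-(w t (ik k)) - δ t (ik k)) - (-(w t (jk k)) - δ t (jk k)))]
      ring
    -- V as a finite sum of squares
    have hfunV : (fun s => (1/4 : ℝ) * ‖err s‖ ^ 2) =
        (fun s => ∑ k, (1/4) * (err s k) ^ 2) := by
      funext s; rw [hnormsq (err s), Finset.mul_sum]
    rw [hfunV]
    have hsum : HasDerivAt (fun s => ∑ k, (1/4 : ℝ) * (err s k) ^ 2)
        (∑ k, (1/4) * ((2:ℕ) * (err t k) ^ 1 *
          (2 * ⟪p t (ik k) - p t (jk k),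
            (-(w t (ik k)) - δ t (ik k)) - (-(w t (jk k)) - δ t (jk k))⟫))) t := by
      apply HasDerivAt.fun_sum
      intro k _
      exact ((hek k).pow 2).const_mul (1/4)
    convert hsum using 1
    -- the algebraic identity
    have hite : ∀ (c : Prop) [Decidable c] (z y : EuclideanSpace ℝ (Fin d)),
        ⟪(if c then z else 0), y⟫ = if c then ⟪z, y⟫ else (0:ℝ) := by
      intro c _ z y; split <;> simp
    calc ∑ i, ⟪w t i, -(w t i) - δ t i⟫
        = ∑ i, ∑ k,
          ((if i = ik k then ⟪err t k • (p t (ik k) - p t (jk k)), -(w t i) - δ t i⟫ else 0) +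
           (if i = jk k then ⟪err t k • (p t (jk k) - p t (ik k)), -(w t i) - δ t i⟫ else 0)) := by
          refine Finset.sum_congr rfl fun i _ => ?_
          rw [hw t i, sum_inner]
          refine Finset.sum_congr rfl fun k _ => ?_
          rw [inner_add_left, hite, hite]
      _ = ∑ k,
          (⟪err t k • (p t (ik k) - p t (jk k)), -(w t (ik k)) - δ t (ik k)⟫ +
           ⟪err t k • (p t (jk k) - p t (ik k)), -(w t (jk k)) - δ t (jk k)⟫) := by
          rw [Finset.sum_comm]
          refine Finset.sum_congr rfl fun k _ => ?_
          rw [Finset.sum_add_distrib, Finset.sum_ite_eq', Finset.sum_ite_eq']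
          simp
      _ = ∑ k, (1/4) * ((2:ℕ) * (err t k) ^ 1 *
            (2 * ⟪p t (ik k) - p t (jk k),
              (-(w t (ik k)) - δ t (ik k)) - (-(w t (jk k)) - δ t (jk k))⟫)) := by
          refine Finset.sum_congr rfl fun k _ => ?_
          rw [real_inner_smul_left, real_inner_smul_left, inner_sub_right]
          have : (p t (jk k) - p t (ik k)) = -(p t (ik k) - p t (jk k)) := by abel
          rw [this, inner_neg_left]
          simp only [inner_sub_right, inner_neg_right]
          push_cast
          ring
  -- the differential inequality
  have hDb : ∀ t, 0 ≤ t → (∑ i, ⟪w t i, -(w t i) - δ t i⟫) ≤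
      -(2*κ) * ((1/4) * ‖err t‖ ^ 2) + ∑ i, v i * Real.exp (-θ i * t) := by
    intro t ht
    have key : ∀ i, ⟪w t i, -(w t i) - δ t i⟫ ≤
        -ζ * ‖w t i‖ ^ 2 + v i * Real.exp (-θ i * t) := by
      intro i
      have hsplit : ⟪w t i, -(w t i) - δ t i⟫ = -‖w t i‖^2 - ⟪w t i, δ t i⟫ := by
        rw [inner_sub_right, inner_neg_right, real_inner_self_eq_norm_sq]
      have hcs : -⟪w t i, δ t i⟫ ≤ ‖w t i‖ * ‖δ t i‖ := by
        have := abs_real_inner_le_norm (w t i) (δ t i)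
        have h' := neg_abs_le ⟪w t i, δ t i⟫
        linarith
      have hy : ‖w t i‖ * ‖δ t i‖ ≤
          (a i / 2 + γ i * (2 - a i) / 2) * ‖w t i‖ ^ 2 + v i * Real.exp (-θ i * t) := by
        have h1 := htrig t ht i
        have h2 := sq_nonneg (a i * ‖w t i‖ - ‖δ t i‖)
        have ha1 := (ha i).1
        nlinarith [norm_nonneg (w t i), norm_nonneg (δ t i), Real.exp_pos (-θ i * t), hv i]
      have hcoef : a i / 2 + γ i * (2 - a i) / 2 - 1 = -((1 - γ i) * (2 - a i) / 2) := by ring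
      have hz : -((1 - γ i) * (2 - a i) / 2) * ‖w t i‖ ^ 2 ≤ -ζ * ‖w t i‖ ^ 2 := by
        have := hζle i
        nlinarith [sq_nonneg ‖w t i‖]
      nlinarith [hsplit, hcs, hy, hz]
    calc (∑ i, ⟪w t i, -(w t i) - δ t i⟫)
        ≤ ∑ i, (-ζ * ‖w t i‖ ^ 2 + v i * Real.exp (-θ i * t)) :=
          Finset.sum_le_sum fun i _ => key i
      _ = -ζ * (∑ i, ‖w t i‖ ^ 2) + ∑ i, v i * Real.exp (-θ i * t) := by
          rw [Finset.sum_add_distrib, Finset.mul_sum]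
      _ ≤ -(2*κ) * ((1/4) * ‖err t‖ ^ 2) + ∑ i, v i * Real.exp (-θ i * t) := by
          have h1 := hlamb t ht
          have : -ζ * (∑ i, ‖w t i‖ ^ 2) ≤ -ζ * (lam * ‖err t‖ ^ 2) := by
            apply mul_le_mul_of_nonpos_left h1 (by linarith)
          rw [hκ]
          nlinarith
  -- the comparison function F
  set B : ℝ → ℝ := fun s => ∑ i, v i / (2*κ - θ i) * (Real.exp ((2*κ - θ i) * s) - 1)
    with hBdef
  set F : ℝ → ℝ := fun s => Real.exp (2*κ*s) * ((1/4) * ‖err s‖ ^ 2) - B s with hFdef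
  have hFderiv : ∀ t, 0 ≤ t → HasDerivAt F
      (Real.exp (2*κ*t) * ((2*κ) * ((1/4) * ‖err t‖ ^ 2) + ∑ i, ⟪w t i, -(w t i) - δ t i⟫)
        - ∑ i, v i * Real.exp ((2*κ - θ i) * t)) t := by
    intro t ht
    have he : HasDerivAt (fun s => Real.exp (2*κ*s)) (2*κ * Real.exp (2*κ*t)) t := by
      have h := ((hasDerivAt_id t).const_mul (2*κ)).exp
      simpa [mul_comm] using h
    have h1 := he.mul (hVderiv t ht)
    have h2 : HasDerivAt B (∑ i, v i * Real.exp ((2*κ - θ i) * t)) t := by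
      rw [hBdef]
      apply HasDerivAt.fun_sum
      intro i _
      have hb : HasDerivAt (fun s => Real.exp ((2*κ - θ i) * s) - 1)
          ((2*κ - θ i) * Real.exp ((2*κ - θ i) * t)) t := by
        have h := ((hasDerivAt_id t).const_mul (2*κ - θ i)).exp
        simpa [mul_comm] using h.sub_const 1
      have := hb.const_mul (v i / (2*κ - θ i))
      refine this.congr_deriv ?_
      rw [← mul_assoc, div_mul_cancel₀ _ (hbne i)]
    have := h1.sub h2
    refine this.congr_deriv ?_
    ring
  have hF0 : F 0 = (1/4) * ‖err 0‖ ^ 2 := by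
    simp [hFdef, hBdef]
  have hmono : ∀ t, 0 ≤ t → F t ≤ F 0 := by
    have hanti : AntitoneOn F (Set.Ici 0) := by
      apply antitoneOn_of_deriv_nonpos (convex_Ici 0)
      · intro x hx
        exact ((hFderiv x hx).continuousAt).continuousWithinAt
      · intro x hx
        rw [interior_Ici] at hx
        exact ((hFderiv x hx.le).differentiableAt).differentiableWithinAt
      · intro x hx
        rw [interior_Ici] at hx
        rw [(hFderiv x hx.le).deriv]
        have h3 : Real.exp (2*κ*x) *
            ((2*κ) * ((1/4) * ‖err x‖ ^ 2) + ∑ i, ⟪w x i, -(w x i) - δ x i⟫) ≤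
            Real.exp (2*κ*x) * (∑ i, v i * Real.exp (-θ i * x)) := by
          apply mul_le_mul_of_nonneg_left _ (Real.exp_nonneg _)
          linarith [hDb x hx.le]
        have h4 : Real.exp (2*κ*x) * (∑ i, v i * Real.exp (-θ i * x)) =
            ∑ i, v i * Real.exp ((2*κ - θ i) * x) := by
          rw [Finset.mul_sum]
          refine Finset.sum_congr rfl fun i _ => ?_
          rw [show (2*κ - θ i) * x = 2*κ*x + (-θ i * x) by ring, Real.exp_add]
          ring
        linarith [h3, h4.le]
    intro t ht
    exact hanti Set.self_mem_Ici ht ht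
  -- main bound
  have hmain : ∀ t ≥ (0:ℝ), (1 / 4) * ‖err t‖ ^ 2 ≤
      Real.exp (-(2 * κ) * t) * ((1 / 4) * ‖err 0‖ ^ 2) +
      ∑ i, v i / (2 * κ - θ i) *
        (Real.exp (-θ i * t) - Real.exp (-(2 * κ) * t)) := by
    intro t ht
    have h5 : Real.exp (2*κ*t) * ((1/4) * ‖err t‖ ^ 2) ≤ (1/4) * ‖err 0‖ ^ 2 + B t := by
      have := hmono t ht
      rw [hF0] at this
      simp only [hFdef] at this
      linarith
    have key := mul_le_mul_of_nonneg_left h5 (Real.exp_nonneg (-(2*κ)*t))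
    calc (1 / 4) * ‖err t‖ ^ 2
        = Real.exp (-(2*κ)*t) * (Real.exp (2*κ*t) * ((1/4) * ‖err t‖ ^ 2)) := by
          rw [← mul_assoc, ← Real.exp_add, show -(2*κ)*t + 2*κ*t = 0 by ring,
            Real.exp_zero, one_mul]
      _ ≤ Real.exp (-(2*κ)*t) * ((1/4) * ‖err 0‖ ^ 2 + B t) := key
      _ = Real.exp (-(2 * κ) * t) * ((1 / 4) * ‖err 0‖ ^ 2) +
          ∑ i, v i / (2 * κ - θ i) *
            (Real.exp (-θ i * t) - Real.exp (-(2 * κ) * t)) := by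
          rw [mul_add, hBdef]
          congr 1
          rw [Finset.mul_sum]
          refine Finset.sum_congr rfl fun i _ => ?_
          rw [mul_comm (Real.exp (-(2*κ)*t)), mul_assoc, sub_mul, one_mul,
            ← Real.exp_add, show (2*κ - θ i)*t + -(2*κ)*t = -θ i * t by ring, mul_sub]
  refine ⟨hmain, ?_⟩
  -- tendsto part
  have h2κ : 0 < 2*κ := by linarith
  have hexp : ∀ (c : ℝ), 0 < c →
      Tendsto (fun t => Real.exp (-c * t)) atTop (nhds 0) := by
    intro c hc
    have h1 : Tendsto (fun t : ℝ => c * t) atTop atTop :=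
      Tendsto.const_mul_atTop hc tendsto_id
    refine (Real.tendsto_exp_neg_atTop_nhds_zero.comp h1).congr fun t => ?_
    simp [Function.comp, neg_mul]
  have hRHS : Tendsto (fun t => Real.exp (-(2 * κ) * t) * ((1 / 4) * ‖err 0‖ ^ 2) +
      ∑ i, v i / (2 * κ - θ i) *
        (Real.exp (-θ i * t) - Real.exp (-(2 * κ) * t))) atTop (nhds 0) := by
    have hA : Tendsto (fun t => Real.exp (-(2 * κ) * t) * ((1 / 4) * ‖err 0‖ ^ 2))
        atTop (nhds 0) := by
      have := (hexp (2*κ) h2κ).mul_const ((1/4) * ‖err 0‖ ^ 2)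
      simpa using this
    have hS : Tendsto (fun t => ∑ i, v i / (2 * κ - θ i) *
        (Real.exp (-θ i * t) - Real.exp (-(2 * κ) * t))) atTop (nhds 0) := by
      have : Tendsto (fun t => ∑ i : Fin n, v i / (2 * κ - θ i) *
          (Real.exp (-θ i * t) - Real.exp (-(2 * κ) * t))) atTop
          (nhds (∑ i : Fin n, v i / (2 * κ - θ i) * ((0:ℝ) - 0))) := by
        apply tendsto_finset_sum
        intro i _
        exact (((hexp (θ i) (hθ i)).sub (hexp (2*κ) h2κ))).const_mul _
      simpa using this
    simpa using hA.add hS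
  have hsq : Tendsto (fun t => (1/4) * ‖err t‖ ^ 2) atTop (nhds 0) := by
    apply tendsto_of_tendsto_of_tendsto_of_le_of_le' tendsto_const_nhds hRHS
    · filter_upwards with t
      positivity
    · filter_upwards [eventually_ge_atTop (0:ℝ)] with t ht
      exact hmain t ht
  have hsq2 : Tendsto (fun t => ‖err t‖ ^ 2) atTop (nhds 0) := by
    have := hsq.const_mul (4:ℝ)
    simp only [mul_zero] at this
    convert this using 2 with t
    ring
  have hsqrt : Tendsto (fun t => Real.sqrt (‖err t‖ ^ 2)) atTop (nhds (Real.sqrt 0)) :=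
    (Real.continuous_sqrt.continuousAt).tendsto.comp hsq2
  have : (fun t => Real.sqrt (‖err t‖ ^ 2)) = fun t => ‖err t‖ := by
    funext t; exact Real.sqrt_sq (norm_nonneg _)
  rw [this, Real.sqrt_zero] at hsqrt
  exact hsqrt
end

section
/- (Zeno-free inter-event bound for the modified event function.) Let α > 0, b ≥ 0, v > 0, θ > 0 and t₀ ≥ 0. Then: (i) there exists a unique τ > 0 such that α·τ = √(b + v·exp(−θ(t₀ + τ))); and (ii) for this τ, if g : [t₀, ∞) → ℝ satisfies g(t₀) = 0 and |g(t) − g(s)| ≤ α|t − s| for all t, s ≥ t₀ (i.e. g is α-Lipschitz), then g(t)² ≤ b + v·exp(−θ t) for all t ∈ [t₀, t₀ + τ]. Hence the next violation of the threshold condition cannot occur before time t₀ + τ, with τ > 0. -/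
/-- **Zeno-free inter-event bound for the modified event function.**
For `α > 0`, `b ≥ 0`, `v > 0`, `θ > 0`, `t₀ ≥ 0`:
(i) there is a unique `τ > 0` with `ατ = √(b + v·exp(−θ(t₀+τ)))`; and
(ii) for this `τ`, any `α`-Lipschitz function `g` on `[t₀,∞)` with `g(t₀) = 0`
satisfies `g(t)² ≤ b + v·exp(−θt)` for all `t ∈ [t₀, t₀+τ]`, so the threshold cannot
be violated before time `t₀ + τ`. -/
theorem zeno_free_inter_event_bound (α b v θ t₀ : ℝ)
    (hα : 0 < α) (hb : 0 ≤ b) (hv : 0 < v) (hθ : 0 < θ) (ht₀ : 0 ≤ t₀) :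
    (∃! τ : ℝ, 0 < τ ∧
      α * τ = Real.sqrt (b + v * Real.exp (-θ * (t₀ + τ)))) ∧
    (∀ τ : ℝ,
      (0 < τ ∧ α * τ = Real.sqrt (b + v * Real.exp (-θ * (t₀ + τ)))) →
      ∀ g : ℝ → ℝ, g t₀ = 0 →
        (∀ t s, t₀ ≤ t → t₀ ≤ s → |g t - g s| ≤ α * |t - s|) →
        ∀ t ∈ Set.Icc t₀ (t₀ + τ), (g t) ^ 2 ≤ b + v * Real.exp (-θ * t)) := by
  -- antitone of the sqrt term
  have hanti : ∀ s t : ℝ, s ≤ t →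
      Real.sqrt (b + v * Real.exp (-θ * (t₀ + t))) ≤
      Real.sqrt (b + v * Real.exp (-θ * (t₀ + s))) := by
    intro s t hst
    apply Real.sqrt_le_sqrt
    have : Real.exp (-θ * (t₀ + t)) ≤ Real.exp (-θ * (t₀ + s)) := by
      apply Real.exp_le_exp.mpr; nlinarith
    nlinarith
  constructor
  · -- existence and uniqueness
    set f : ℝ → ℝ := fun τ => α * τ - Real.sqrt (b + v * Real.exp (-θ * (t₀ + τ))) with hf
    have hcont : Continuous f := by
      apply Continuous.sub (continuous_const.mul continuous_id)
      exact Real.continuous_sqrt.comp (by continuity)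
    set M : ℝ := Real.sqrt (b + v) / α + 1 with hM
    have hM0 : (0:ℝ) ≤ M := by positivity
    have hf0 : f 0 < 0 := by
      have : 0 < Real.sqrt (b + v * Real.exp (-θ * (t₀ + 0))) := by
        apply Real.sqrt_pos.mpr; positivity
      simp only [hf]; linarith
    have hfM : 0 < f M := by
      have h1 : Real.sqrt (b + v * Real.exp (-θ * (t₀ + M))) ≤ Real.sqrt (b + v) := by
        apply Real.sqrt_le_sqrt
        have he : Real.exp (-θ * (t₀ + M)) ≤ 1 := by
          apply Real.exp_le_one_iff.mpr; nlinarith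
        nlinarith
      have h2 : α * M = Real.sqrt (b + v) + α := by
        rw [hM, mul_add, mul_one, mul_div_assoc', mul_div_cancel_left₀ _ hα.ne']
      simp only [hf]; linarith
    have hsub := intermediate_value_Icc hM0 hcont.continuousOn
    have h0mem : (0:ℝ) ∈ Set.Icc (f 0) (f M) := ⟨le_of_lt hf0, le_of_lt hfM⟩
    obtain ⟨τ, hτmem, hτeq⟩ := hsub h0mem
    have hτpos : 0 < τ := by
      rcases lt_or_eq_of_le hτmem.1 with h | h
      · exact h
      · exfalso; rw [← h] at hτeq; rw [hτeq] at hf0; exact lt_irrefl 0 hf0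
    have heq : α * τ = Real.sqrt (b + v * Real.exp (-θ * (t₀ + τ))) := by
      have := hτeq; simp only [hf] at this; linarith
    refine ⟨τ, ⟨hτpos, heq⟩, ?_⟩
    rintro τ' ⟨hτ'pos, heq'⟩
    by_contra hne
    rcases lt_or_gt_of_ne hne with h | h
    · have h1 : α * τ' < α * τ := by nlinarith
      have h2 := hanti τ' τ (le_of_lt h)
      rw [← heq, ← heq'] at h2
      linarith
    · have h1 : α * τ < α * τ' := by nlinarith
      have h2 := hanti τ τ' (le_of_lt h)
      rw [← heq, ← heq'] at h2
      linarith
  · -- part (ii)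
    rintro τ ⟨hτpos, heq⟩ g hg0 hlip t ⟨ht1, ht2⟩
    have hb1 : |g t - g t₀| ≤ α * |t - t₀| := hlip t t₀ ht1 le_rfl
    rw [hg0, sub_zero, abs_of_nonneg (by linarith : (0:ℝ) ≤ t - t₀)] at hb1
    have h2 : α * (t - t₀) ≤ α * τ := by nlinarith
    have h3 : |g t| ≤ α * τ := le_trans hb1 h2
    have h4 : (g t) ^ 2 ≤ (α * τ) ^ 2 := by
      have := abs_nonneg (g t)
      calc (g t) ^ 2 = |g t| ^ 2 := (sq_abs _).symm
        _ ≤ (α * τ) ^ 2 := by nlinarith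
    have h5 : (α * τ) ^ 2 = b + v * Real.exp (-θ * (t₀ + τ)) := by
      rw [heq, Real.sq_sqrt (by positivity)]
    have h6 : Real.exp (-θ * (t₀ + τ)) ≤ Real.exp (-θ * t) := by
      apply Real.exp_le_exp.mpr; nlinarith
    nlinarith
end
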